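/- Let M = ⟨s, t | s^ε = t^δ = 1, tst⁻¹ = s^κ⟩ be a group of squarefree order n = δε, and set ζ = gcd(κ−1, ε) and γ = ε/ζ. Then with X = s^ζ and Y = t·s^γ, the group M has the presentation ⟨X, Y | X^γ = Y^{ζδ} = 1, YXY⁻¹ = X^κ⟩. -/

import Mathlib

/-- The relators for the group `G(d,e,k) = ⟨σ, τ | σ^e = τ^d = 1, τστ⁻¹ = σ^k⟩`
(generator 0 has order `e`, generator 1 has order `d`). -/
def braceRels (d e k : ℕ) : Set (FreeGroup (Fin 2)) :=
  {FreeGroup.of 0 ^ e, FreeGroup.of 1 ^ d,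
    FreeGroup.of 1 * FreeGroup.of 0 * (FreeGroup.of 1)⁻¹ * (FreeGroup.of 0 ^ k)⁻¹}

/-- The group `G(d,e,k)` presented by generators σ (index 0) and τ (index 1). -/
abbrev GGrp (d e k : ℕ) := PresentedGroup (braceRels d e k)

lemma ggrp_mk_rel {d e k : ℕ} {r : FreeGroup (Fin 2)} (h : r ∈ braceRels d e k) :
    PresentedGroup.mk (braceRels d e k) r = 1 :=
  (QuotientGroup.eq_one_iff r).mpr (Subgroup.subset_normalClosure h)

lemma ggrp_rel_e (d e k : ℕ) : (PresentedGroup.of 0 : GGrp d e k) ^ e = 1 := by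
  have := ggrp_mk_rel (d := d) (e := e) (k := k) (Set.mem_insert _ _)
  rwa [map_pow] at this

lemma ggrp_rel_d (d e k : ℕ) : (PresentedGroup.of 1 : GGrp d e k) ^ d = 1 := by
  have := ggrp_mk_rel (d := d) (e := e) (k := k)
    (Set.mem_insert_of_mem _ (Set.mem_insert _ _))
  rwa [map_pow] at this

lemma ggrp_rel_conj (d e k : ℕ) :
    (PresentedGroup.of 1 : GGrp d e k) * PresentedGroup.of 0 * (PresentedGroup.of 1)⁻¹ =
      (PresentedGroup.of 0 : GGrp d e k) ^ k := by
  have := ggrp_mk_rel (d := d) (e := e) (k := k)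
    (Set.mem_insert_of_mem _ (Set.mem_insert_of_mem _ rfl))
  rw [map_mul, map_mul, map_mul, map_inv, map_inv, map_pow] at this
  exact mul_inv_eq_one.mp this

section GroupCalc
variable {G : Type*} [Group G] {s t : G} {e k : ℕ}

/-- `s^(e*w) = 1` for integer `w` when `s^e = 1`. -/
lemma hzpow_one (hs : s ^ e = 1) (w : ℤ) : s ^ ((e : ℤ) * w) = 1 := by
  rw [zpow_mul, zpow_natCast, hs, one_zpow]

lemma pow_eq_pow_of_modEq' (hs : s ^ e = 1) {m m' : ℕ} (h : m ≡ m' [MOD e]) :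
    s ^ m = s ^ m' := by
  have key : ∀ j : ℕ, s ^ j = s ^ (j % e) := by
    intro j
    conv_lhs => rw [← Nat.div_add_mod j e]
    rw [pow_add, pow_mul, hs, one_pow, one_mul]
  rw [key m, key m', h]

/-- conjugation relation, integer powers -/
lemma conj_zpow' (hr : t * s * t⁻¹ = s ^ k) (m : ℤ) :
    t * s ^ m * t⁻¹ = s ^ ((k : ℤ) * m) := by
  rw [← conj_zpow, hr, ← zpow_natCast, ← zpow_mul]

lemma conj_pow' (hr : t * s * t⁻¹ = s ^ k) (m : ℕ) :
    t * s ^ m * t⁻¹ = s ^ (k * m) := by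
  rw [← conj_pow, hr, ← pow_mul]

/-- `t^j * s^g = s^(k^j * g) * t^j` -/
lemma pow_conj (hr : t * s * t⁻¹ = s ^ k) (j g : ℕ) :
    t ^ j * s ^ g = s ^ (k ^ j * g) * t ^ j := by
  induction j generalizing g with
  | zero => simp
  | succ j ih =>
    have h1 : t * s ^ g = s ^ (k * g) * t := by
      have := conj_pow' hr g
      rw [← this]; group
    calc t ^ (j + 1) * s ^ g = t ^ j * (t * s ^ g) := by rw [pow_succ]; group
      _ = t ^ j * (s ^ (k * g) * t) := by rw [h1]
      _ = (t ^ j * s ^ (k * g)) * t := by group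
      _ = s ^ (k ^ j * (k * g)) * t ^ j * t := by rw [ih (k * g)]
      _ = s ^ (k ^ (j + 1) * g) * t ^ (j + 1) := by
          rw [pow_succ, mul_assoc, ← pow_succ]
          congr 2
          ring

lemma geom_pow (hr : t * s * t⁻¹ = s ^ k) (g : ℕ) (j : ℕ) :
    (s ^ g * t) ^ j = s ^ (g * ∑ i ∈ Finset.range j, k ^ i) * t ^ j := by
  induction j with
  | zero => simp
  | succ j ih =>
    rw [pow_succ, ih, Finset.sum_range_succ]
    calc s ^ (g * ∑ i ∈ Finset.range j, k ^ i) * t ^ j * (s ^ g * t)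
        = s ^ (g * ∑ i ∈ Finset.range j, k ^ i) * (t ^ j * s ^ g) * t := by group
      _ = s ^ (g * ∑ i ∈ Finset.range j, k ^ i) * (s ^ (k ^ j * g) * t ^ j) * t := by
          rw [pow_conj hr]
      _ = s ^ (g * ∑ i ∈ Finset.range j, k ^ i) * s ^ (k ^ j * g) * t ^ (j + 1) := by
          rw [pow_succ]; group
      _ = s ^ (g * (∑ i ∈ Finset.range j, k ^ i + k ^ j)) * t ^ (j + 1) := by
          rw [← pow_add]
          congr 2
          ring

lemma Y_pow_d {d : ℕ} (hr : t * s * t⁻¹ = s ^ k) (ht : t ^ d = 1) (g : ℕ) :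
    (t * s ^ g) ^ d = s ^ (k * (g * ∑ i ∈ Finset.range d, k ^ i)) := by
  have h0 : t * s ^ g = t * (s ^ g * t) * t⁻¹ := by group
  rw [h0, conj_pow, geom_pow hr, ht, mul_one, conj_pow' hr]


/-- Let `M = G(δ,ε,κ) = ⟨s, t | s^ε = t^δ = 1, tst⁻¹ = s^κ⟩` have squarefree order
`n = δε`, and set `ζ = gcd(κ-1,ε)`, `γ = ε/ζ`. Then with `X = s^ζ` and `Y = t·s^γ`,
`M` has the presentation `⟨X, Y | X^γ = Y^{ζδ} = 1, YXY⁻¹ = X^κ⟩`; i.e. there is an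
isomorphism from the latter presented group to `M` sending the generators to
`s^ζ` and `t·s^γ` respectively. -/
theorem new_presentation (n δ ε κ : ℕ) (hn : Squarefree n) (hde : n = δ * ε)
    (hcop : Nat.Coprime δ ε) (hke : Nat.Coprime κ ε)
    (hord : orderOf (ZMod.unitOfCoprime κ hke) = δ)
    (ζ γ : ℕ) (hζ : ζ = Nat.gcd (κ - 1) ε) (hγ : γ = ε / ζ) :
    ∃ f : GGrp (ζ * δ) γ κ ≃* GGrp δ ε κ,
      f (PresentedGroup.of 0) = (PresentedGroup.of 0 : GGrp δ ε κ) ^ ζ ∧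
      f (PresentedGroup.of 1) =
        (PresentedGroup.of 1 : GGrp δ ε κ) * (PresentedGroup.of 0 : GGrp δ ε κ) ^ γ := by
  ------------------------------------------------------------------
  -- arithmetic preliminaries
  ------------------------------------------------------------------
  have hn0 : n ≠ 0 := hn.ne_zero
  have hε0 : 0 < ε := Nat.pos_of_ne_zero fun h => hn0 (by rw [hde, h, mul_zero])
  have hδ0 : 0 < δ := Nat.pos_of_ne_zero fun h => hn0 (by rw [hde, h, zero_mul])
  have hζdvd : ζ ∣ ε := hζ ▸ Nat.gcd_dvd_right _ _
  have hζ0 : 0 < ζ := Nat.pos_of_dvd_of_pos hζdvd hε0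
  have hεζγ : ε = ζ * γ := by rw [hγ, Nat.mul_div_cancel' hζdvd]
  have hεζγ' : (ε : ℤ) = (ζ : ℤ) * (γ : ℤ) := by exact_mod_cast hεζγ
  have hsfε : Squarefree ε := hn.squarefree_of_dvd (hde ▸ dvd_mul_left ε δ)
  have hζγcop : Nat.Coprime ζ γ := Nat.coprime_of_squarefree_mul (hεζγ ▸ hsfε)
  -- κ ≡ 1 [MOD ζ]
  have hκζ : κ ≡ 1 [MOD ζ] := by
    rcases Nat.eq_zero_or_pos κ with h0 | h1
    · subst h0
      have hε1 : ε = 1 := Nat.coprime_zero_left ε |>.mp hke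
      have hζ1 : ζ = 1 := Nat.dvd_one.mp (hε1 ▸ hζdvd)
      simp [hζ1, Nat.modEq_one]
    · have hd : ζ ∣ κ - 1 := hζ ▸ Nat.gcd_dvd_left _ _
      exact ((Nat.modEq_iff_dvd' h1).mpr hd).symm
  have hζκ1 : (ζ : ℤ) ∣ (κ : ℤ) - 1 := by
    have h := hκζ.dvd
    have h2 : (ζ : ℤ) ∣ 1 - (κ : ℤ) := by simpa using h
    obtain ⟨v, hv⟩ := h2
    exact ⟨-v, by linarith⟩
  -- κ ^ δ ≡ 1 [MOD ε] hence [MOD γ]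
  have hκδ : κ ^ δ ≡ 1 [MOD ε] := by
    have h1 : (ZMod.unitOfCoprime κ hke) ^ δ = 1 := hord ▸ pow_orderOf_eq_one _
    have h2 : ((κ : ZMod ε)) ^ δ = 1 := by
      have := congrArg (Units.val) h1
      simpa [ZMod.coe_unitOfCoprime] using this
    have h3 : ((κ ^ δ : ℕ) : ZMod ε) = ((1 : ℕ) : ZMod ε) := by push_cast; simpa using h2
    exact (ZMod.natCast_eq_natCast_iff _ _ _).mp h3
  have hγdvdε : γ ∣ ε := ⟨ζ, by rw [hεζγ, mul_comm]⟩
  have hκδγ : κ ^ δ ≡ 1 [MOD γ] := hκδ.of_dvd hγdvdε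
  -- the integer c with Y^δ = s^(γ*c)
  set c : ℕ := κ * ∑ i ∈ Finset.range δ, κ ^ i with hcdef
  have hsum : ∀ j : ℕ, (∑ i ∈ Finset.range j, κ ^ i) ≡ j [MOD ζ] := by
    intro j
    induction j with
    | zero => rfl
    | succ j ih =>
      rw [Finset.sum_range_succ]
      have : κ ^ j ≡ 1 [MOD ζ] := by simpa using hκζ.pow j
      exact ih.add this
  have hcδ : c ≡ δ [MOD ζ] := by
    have h := hκζ.mul (hsum δ)
    simpa using h
  have hζδcop : Nat.Coprime ζ δ := Nat.Coprime.coprime_dvd_left hζdvd hcop.symm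
  have hζc : Nat.Coprime ζ c := by
    have h1 : Nat.gcd ζ c = Nat.gcd ζ δ := by
      rw [Nat.gcd_rec ζ c, Nat.gcd_rec ζ δ, show c % ζ = δ % ζ from hcδ]
    exact h1.trans hζδcop
  have hζγc : Nat.Coprime ζ (γ * c) := Nat.Coprime.mul_right hζγcop hζc
  obtain ⟨A, B, hbez⟩ : ∃ A B : ℤ, A * (ζ : ℤ) + B * ((γ : ℤ) * (c : ℤ)) = 1 := by
    obtain ⟨A, B, h⟩ := Nat.isCoprime_iff_coprime.mpr hζγc
    exact ⟨A, B, by push_cast at h ⊢; linarith⟩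
  ------------------------------------------------------------------
  -- relations in the two presented groups
  ------------------------------------------------------------------
  -- M = GGrp δ ε κ with generators s = of 0, t = of 1
  have hsε : (PresentedGroup.of 0 : GGrp δ ε κ) ^ ε = 1 := ggrp_rel_e δ ε κ
  have htδ : (PresentedGroup.of 1 : GGrp δ ε κ) ^ δ = 1 := ggrp_rel_d δ ε κ
  have hst : (PresentedGroup.of 1 : GGrp δ ε κ) * PresentedGroup.of 0 *
      (PresentedGroup.of 1)⁻¹ = (PresentedGroup.of 0 : GGrp δ ε κ) ^ κ :=
    ggrp_rel_conj δ ε κ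
  -- G' = GGrp (ζ*δ) γ κ with generators x = of 0, y = of 1
  have hxγ : (PresentedGroup.of 0 : GGrp (ζ * δ) γ κ) ^ γ = 1 := ggrp_rel_e (ζ * δ) γ κ
  have hyζδ : (PresentedGroup.of 1 : GGrp (ζ * δ) γ κ) ^ (ζ * δ) = 1 := ggrp_rel_d (ζ * δ) γ κ
  have hyx : (PresentedGroup.of 1 : GGrp (ζ * δ) γ κ) * PresentedGroup.of 0 *
      (PresentedGroup.of 1)⁻¹ = (PresentedGroup.of 0 : GGrp (ζ * δ) γ κ) ^ κ :=
    ggrp_rel_conj (ζ * δ) γ κ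
  ------------------------------------------------------------------
  -- the homomorphism f : GGrp (ζδ) γ κ →* GGrp δ ε κ,  x ↦ s^ζ, y ↦ t·s^γ
  ------------------------------------------------------------------
  have hYδ : ((PresentedGroup.of 1 : GGrp δ ε κ) * PresentedGroup.of 0 ^ γ) ^ δ =
      (PresentedGroup.of 0 : GGrp δ ε κ) ^ (γ * c) := by
    rw [Y_pow_d hst htδ γ, hcdef]
    congr 1
    ring
  have hf : ∀ r ∈ braceRels (ζ * δ) γ κ,
      FreeGroup.lift (![(PresentedGroup.of 0 : GGrp δ ε κ) ^ ζ,
        PresentedGroup.of 1 * PresentedGroup.of 0 ^ γ]) r = 1 := by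
    intro r hr
    simp only [braceRels, Set.mem_insert_iff, Set.mem_singleton_iff] at hr
    rcases hr with rfl | rfl | rfl
    · rw [map_pow, FreeGroup.lift_apply_of]
      show ((PresentedGroup.of 0 : GGrp δ ε κ) ^ ζ) ^ γ = 1
      rw [← pow_mul, ← hεζγ, hsε]
    · rw [map_pow, FreeGroup.lift_apply_of]
      show ((PresentedGroup.of 1 : GGrp δ ε κ) * PresentedGroup.of 0 ^ γ) ^ (ζ * δ) = 1
      rw [mul_comm ζ δ, pow_mul, hYδ, ← pow_mul]
      have he : γ * c * ζ = ε * c := by rw [hεζγ]; ring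
      rw [he, pow_mul, hsε, one_pow]
    · simp only [map_mul, map_inv, map_pow, FreeGroup.lift_apply_of]
      show (PresentedGroup.of 1 * PresentedGroup.of 0 ^ γ) * (PresentedGroup.of 0 : GGrp δ ε κ) ^ ζ *
          (PresentedGroup.of 1 * PresentedGroup.of 0 ^ γ)⁻¹ *
          (((PresentedGroup.of 0 : GGrp δ ε κ) ^ ζ) ^ κ)⁻¹ = 1
      rw [mul_inv_eq_one]
      have h1 : (PresentedGroup.of 1 * PresentedGroup.of 0 ^ γ) * (PresentedGroup.of 0 : GGrp δ ε κ) ^ ζ *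
          (PresentedGroup.of 1 * PresentedGroup.of 0 ^ γ)⁻¹ =
          PresentedGroup.of 1 * ((PresentedGroup.of 0 : GGrp δ ε κ) ^ γ * PresentedGroup.of 0 ^ ζ *
            (PresentedGroup.of 0 ^ γ)⁻¹) * (PresentedGroup.of 1)⁻¹ := by group
      have h2 : (PresentedGroup.of 0 : GGrp δ ε κ) ^ γ * PresentedGroup.of 0 ^ ζ *
          (PresentedGroup.of 0 ^ γ)⁻¹ = PresentedGroup.of 0 ^ ζ := by
        rw [← pow_add, add_comm, pow_add, mul_inv_cancel_right]
      rw [h1, h2, conj_pow' hst, mul_comm κ ζ, pow_mul]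
  ------------------------------------------------------------------
  -- commutation of x with y^δ in GGrp (ζδ) γ κ
  ------------------------------------------------------------------
  have hCx : Commute (PresentedGroup.of 0 : GGrp (ζ * δ) γ κ) (PresentedGroup.of 1 ^ δ) := by
    have h := pow_conj hyx δ 1
    rw [pow_one, mul_one] at h
    have h2 : (PresentedGroup.of 0 : GGrp (ζ * δ) γ κ) ^ (κ ^ δ) = PresentedGroup.of 0 := by
      have h3 := pow_eq_pow_of_modEq' hxγ hκδγ
      rwa [pow_one] at h3
    rw [h2] at h
    exact h.symm
  have hCy : ∀ w : ℤ, Commute (PresentedGroup.of 0 : GGrp (ζ * δ) γ κ)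
      (PresentedGroup.of 1 ^ ((δ : ℤ) * w)) := by
    intro w
    have h : (PresentedGroup.of 1 : GGrp (ζ * δ) γ κ) ^ ((δ : ℤ) * w) =
        (PresentedGroup.of 1 ^ δ) ^ w := by
      rw [zpow_mul, zpow_natCast]
    rw [h]
    exact hCx.zpow_right w
  ------------------------------------------------------------------
  -- the images S, T of s, t under the inverse homomorphism g
  ------------------------------------------------------------------
  set x : GGrp (ζ * δ) γ κ := PresentedGroup.of 0 with hxdef
  set y : GGrp (ζ * δ) γ κ := PresentedGroup.of 1 with hydef
  set S : GGrp (ζ * δ) γ κ := x ^ A * y ^ ((δ : ℤ) * B) with hSdef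
  set T : GGrp (ζ * δ) γ κ := y ^ (1 - (δ : ℤ) * B * γ) with hTdef
  have hSpow : ∀ m : ℕ, S ^ m = x ^ (A * m) * y ^ ((δ : ℤ) * (B * m)) := by
    intro m
    have hcm : Commute (x ^ A) (y ^ ((δ : ℤ) * B)) := (hCy B).zpow_left A
    rw [hSdef, hcm.mul_pow]
    congr 1
    · rw [← zpow_natCast (x ^ A), ← zpow_mul]
    · rw [← zpow_natCast (y ^ ((δ : ℤ) * B)), ← zpow_mul, mul_assoc]
  have hSε : S ^ ε = 1 := by
    rw [hSpow ε]
    have e1 : x ^ (A * (ε : ℤ)) = 1 := by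
      rw [show A * (ε : ℤ) = (γ : ℤ) * (A * ζ) by rw [hεζγ']; ring]
      exact hzpow_one hxγ _
    have e2 : y ^ ((δ : ℤ) * (B * ε)) = 1 := by
      rw [show (δ : ℤ) * (B * ε) = ((ζ * δ : ℕ) : ℤ) * (B * γ) by push_cast; rw [hεζγ']; ring]
      exact hzpow_one hyζδ _
    rw [e1, e2, one_mul]
  have hζdvd1 : ∃ w : ℤ, 1 - (δ : ℤ) * B * γ = (ζ : ℤ) * w := by
    have h1 : (ζ : ℤ) ∣ (δ : ℤ) - (c : ℤ) := by
      have := hcδ.dvd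
      simpa using this
    obtain ⟨w, hw⟩ := h1
    exact ⟨A + B * γ * (-w), by linear_combination hbez.symm - B * (γ : ℤ) * hw⟩
  obtain ⟨W, hW⟩ := hζdvd1
  have hTδ : T ^ δ = 1 := by
    rw [hTdef, ← zpow_natCast (y ^ (1 - (δ : ℤ) * B * γ)), ← zpow_mul, hW]
    rw [show (ζ : ℤ) * W * (δ : ℕ) = ((ζ * δ : ℕ) : ℤ) * W by push_cast; ring]
    exact hzpow_one hyζδ _
  have hTsplit : T = y * y ^ ((δ : ℤ) * (-(B * γ))) := by
    have h := (zpow_add y 1 ((δ : ℤ) * (-(B * γ)))).symm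
    rw [zpow_one] at h
    rw [hTdef, show (1 - (δ : ℤ) * B * γ) = 1 + (δ : ℤ) * (-(B * γ)) by ring]
    exact h.symm
  have hTST : T * S * T⁻¹ = x ^ ((κ : ℤ) * A) * y ^ ((δ : ℤ) * B) := by
    have hy1 : T * y ^ ((δ : ℤ) * B) = y ^ ((δ : ℤ) * B) * T := by
      rw [hTdef, ← zpow_add, ← zpow_add, add_comm]
    have hcA : Commute (x ^ A) (y ^ ((δ : ℤ) * (-(B * γ)))) := (hCy (-(B * γ))).zpow_left A
    calc T * S * T⁻¹ = T * x ^ A * (y ^ ((δ : ℤ) * B) * T⁻¹) := by rw [hSdef]; group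
      _ = T * x ^ A * (T⁻¹ * y ^ ((δ : ℤ) * B)) := by
          congr 1
          rw [hTdef, ← zpow_neg, ← zpow_add, ← zpow_add, add_comm]
      _ = (T * x ^ A * T⁻¹) * y ^ ((δ : ℤ) * B) := by group
      _ = x ^ ((κ : ℤ) * A) * y ^ ((δ : ℤ) * B) := by
          congr 1
          rw [hTsplit]
          have : y * y ^ ((δ : ℤ) * (-(B * γ))) * x ^ A *
              (y * y ^ ((δ : ℤ) * (-(B * γ))))⁻¹ =
              y * (y ^ ((δ : ℤ) * (-(B * γ))) * x ^ A *
                (y ^ ((δ : ℤ) * (-(B * γ))))⁻¹) * y⁻¹ := by group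
          rw [this, ← hcA.eq, mul_inv_cancel_right]
          exact conj_zpow' hyx A
  have hyeqκ : y ^ ((δ : ℤ) * (B * κ)) = y ^ ((δ : ℤ) * B) := by
    obtain ⟨v, hv⟩ := hζκ1
    rw [show (δ : ℤ) * (B * κ) = (δ : ℤ) * B + ((ζ * δ : ℕ) : ℤ) * (B * v) by
      push_cast; linear_combination (δ : ℤ) * B * hv]
    rw [zpow_add, hzpow_one hyζδ, mul_one]
  have hSκ : S ^ κ = x ^ ((κ : ℤ) * A) * y ^ ((δ : ℤ) * B) := by
    rw [hSpow κ, hyeqκ, mul_comm A (κ : ℤ)]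
  ------------------------------------------------------------------
  -- the homomorphism g : GGrp δ ε κ →* GGrp (ζδ) γ κ
  ------------------------------------------------------------------
  have hg : ∀ r ∈ braceRels δ ε κ, FreeGroup.lift (![S, T]) r = 1 := by
    intro r hr
    simp only [braceRels, Set.mem_insert_iff, Set.mem_singleton_iff] at hr
    rcases hr with rfl | rfl | rfl
    · rw [map_pow, FreeGroup.lift_apply_of]
      show S ^ ε = 1
      exact hSε
    · rw [map_pow, FreeGroup.lift_apply_of]
      show T ^ δ = 1
      exact hTδ
    · simp only [map_mul, map_inv, map_pow, FreeGroup.lift_apply_of]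
      show T * S * T⁻¹ * (S ^ κ)⁻¹ = 1
      rw [mul_inv_eq_one, hTST, hSκ]
  ------------------------------------------------------------------
  -- further identities in GGrp (ζδ) γ κ
  ------------------------------------------------------------------
  have hSζ : S ^ ζ = x := by
    rw [hSpow ζ]
    have e2 : y ^ ((δ : ℤ) * (B * ζ)) = 1 := by
      rw [show (δ : ℤ) * (B * ζ) = ((ζ * δ : ℕ) : ℤ) * B by push_cast; ring]
      exact hzpow_one hyζδ _
    have e1 : x ^ (A * (ζ : ℤ)) = x := by
      rw [show A * (ζ : ℤ) = 1 + (γ : ℤ) * (-(B * c)) by linear_combination hbez]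
      rw [zpow_add, zpow_one, hzpow_one hxγ, mul_one]
    rw [e1, e2, mul_one]
  have hSγ : S ^ γ = y ^ ((δ : ℤ) * (B * γ)) := by
    rw [hSpow γ]
    have e1 : x ^ (A * (γ : ℤ)) = 1 := by
      rw [show A * (γ : ℤ) = (γ : ℤ) * A by ring]
      exact hzpow_one hxγ _
    rw [e1, one_mul]
  have hTSγ : T * S ^ γ = y := by
    rw [hSγ, hTdef, ← zpow_add]
    rw [show 1 - (δ : ℤ) * B * γ + (δ : ℤ) * (B * γ) = 1 by ring, zpow_one]
  ------------------------------------------------------------------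
  -- identities in GGrp δ ε κ
  ------------------------------------------------------------------
  have hYz : ∀ w : ℤ, ((PresentedGroup.of 1 : GGrp δ ε κ) * PresentedGroup.of 0 ^ γ) ^
      ((δ : ℤ) * w) = (PresentedGroup.of 0 : GGrp δ ε κ) ^ (((γ * c : ℕ) : ℤ) * w) := by
    intro w
    rw [zpow_mul, zpow_natCast, hYδ,
      ← zpow_natCast ((PresentedGroup.of 0 : GGrp δ ε κ)) (γ * c), ← zpow_mul]
  have hfg0 : ((PresentedGroup.of 0 : GGrp δ ε κ) ^ ζ) ^ A *
      ((PresentedGroup.of 1 * PresentedGroup.of 0 ^ γ : GGrp δ ε κ) ^ ((δ : ℤ) * B)) =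
      PresentedGroup.of 0 := by
    rw [hYz B, ← zpow_natCast ((PresentedGroup.of 0 : GGrp δ ε κ)) ζ, ← zpow_mul, ← zpow_add]
    rw [show (ζ : ℤ) * A + ((γ * c : ℕ) : ℤ) * B = 1 by push_cast; linear_combination hbez]
    rw [zpow_one]
  have hfg1 : ((PresentedGroup.of 1 : GGrp δ ε κ) * PresentedGroup.of 0 ^ γ) ^
      (1 - (δ : ℤ) * B * γ) = PresentedGroup.of 1 := by
    rw [show (1 - (δ : ℤ) * B * γ) = 1 + (δ : ℤ) * (-(B * γ)) by ring, zpow_add, zpow_one,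
      hYz (-(B * γ)), mul_assoc, ← zpow_natCast ((PresentedGroup.of 0 : GGrp δ ε κ)) γ,
      ← zpow_add]
    rw [show (γ : ℤ) + ((γ * c : ℕ) : ℤ) * (-(B * γ)) = (ε : ℤ) * A by
      push_cast; linear_combination (-(γ : ℤ)) * hbez - A * hεζγ']
    rw [hzpow_one hsε, mul_one]
  ------------------------------------------------------------------
  -- assembling the isomorphism
  ------------------------------------------------------------------
  refine ⟨MonoidHom.toMulEquiv (PresentedGroup.toGroup hf) (PresentedGroup.toGroup hg)
    ?_ ?_, ?_, ?_⟩
  · apply PresentedGroup.ext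
    rw [Fin.forall_fin_two]
    constructor
    · simp only [MonoidHom.comp_apply, MonoidHom.id_apply, PresentedGroup.toGroup.of,
        Matrix.cons_val_zero, map_pow, PresentedGroup.toGroup.of]
      exact hSζ
    · simp only [MonoidHom.comp_apply, MonoidHom.id_apply, PresentedGroup.toGroup.of,
        Matrix.cons_val_one, Matrix.head_cons, Matrix.cons_val_zero, map_mul, map_pow,
        PresentedGroup.toGroup.of]
      exact hTSγ
  · apply PresentedGroup.ext
    rw [Fin.forall_fin_two]
    constructor
    · simp only [MonoidHom.comp_apply, MonoidHom.id_apply, PresentedGroup.toGroup.of,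
        Matrix.cons_val_zero, hSdef, hxdef, hydef, map_mul, map_zpow, PresentedGroup.toGroup.of]
      exact hfg0
    · simp only [MonoidHom.comp_apply, MonoidHom.id_apply, PresentedGroup.toGroup.of,
        Matrix.cons_val_one, Matrix.head_cons, Matrix.cons_val_zero, hTdef, hxdef, hydef, map_zpow,
        PresentedGroup.toGroup.of]
      exact hfg1
  · show PresentedGroup.toGroup hf (PresentedGroup.of 0) = _
    rw [PresentedGroup.toGroup.of]
    simp only [Matrix.cons_val_zero]
  · show PresentedGroup.toGroup hf (PresentedGroup.of 1) = _
    rw [PresentedGroup.toGroup.of]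
    simp only [Matrix.cons_val_one, Matrix.head_cons, Matrix.cons_val_zero]
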